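/- Let S(G,p) be the n × (d+1)n block-diagonal matrix whose i-th row has p(i)ᵀ in the i-th block of d+1 columns and zeros elsewhere, where each p(i) ∈ ℝ^{d+1} is nonzero. Then the map sending ṗ in the kernel of the stacked matrix [R(G,p); S(G,p)] to q̇ defined by q̇(i) = ṗ(i)/‖p(i)‖ is a linear bijection onto the kernel of [R(G,p̄); S(G,p̄)], where p̄(i) = p(i)/‖p(i)‖; in particular the two kernels have equal dimension. -/

import Mathlib

noncomputable section

private lemma key_scale {d : ℕ} (a b x y : EuclideanSpace ℝ (Fin (d + 1))) (ca cb : ℝ)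
    (ha : (inner ℝ a x : ℝ) = 0) (hb : (inner ℝ b y : ℝ) = 0)
    (h : (inner ℝ (a - b) (x - y) : ℝ) = 0) :
    (inner ℝ (ca • a - cb • b) (ca • x - cb • y) : ℝ) = 0 := by
  simp only [inner_sub_left, inner_sub_right, real_inner_smul_left, real_inner_smul_right] at *
  linear_combination ca * cb * h + (ca ^ 2 - ca * cb) * ha + (cb ^ 2 - ca * cb) * hb

/-- rescaling `ṗ(i) ↦ ṗ(i)/‖p(i)‖` is a linear bijection from the kernel
of `[R(G,p); S(G,p)]` onto the kernel of `[R(G,p̄); S(G,p̄)]`, where `p̄(i) = p(i)/‖p(i)‖`;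
in particular the two kernels have equal dimension. -/
theorem kernel_bijection_central_projection {V : Type*} [Fintype V] (d : ℕ)
    (G : SimpleGraph V) (p : V → EuclideanSpace ℝ (Fin (d + 1))) (hp : ∀ i, p i ≠ 0) :
    IsLinearMap ℝ
      (fun pdot : V → EuclideanSpace ℝ (Fin (d + 1)) => fun i => ‖p i‖⁻¹ • pdot i) ∧
    Set.BijOn
      (fun pdot : V → EuclideanSpace ℝ (Fin (d + 1)) => fun i => ‖p i‖⁻¹ • pdot i)
      {pdot : V → EuclideanSpace ℝ (Fin (d + 1)) |
        (∀ u v, G.Adj u v → (inner ℝ (p u - p v) (pdot u - pdot v) : ℝ) = 0) ∧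
        ∀ i, (inner ℝ (p i) (pdot i) : ℝ) = 0}
      {qdot : V → EuclideanSpace ℝ (Fin (d + 1)) |
        (∀ u v, G.Adj u v →
          (inner ℝ ((‖p u‖⁻¹ • p u) - (‖p v‖⁻¹ • p v)) (qdot u - qdot v) : ℝ) = 0) ∧
        ∀ i, (inner ℝ (‖p i‖⁻¹ • p i) (qdot i) : ℝ) = 0} := by
  have hnorm : ∀ i, ‖p i‖ ≠ 0 := fun i => norm_ne_zero_iff.mpr (hp i)
  refine ⟨⟨fun x y => ?_, fun c x => ?_⟩, ?_, ?_, ?_⟩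
  · funext i; exact smul_add _ _ _
  · funext i; exact smul_comm (‖p i‖⁻¹) c (x i)
  · -- MapsTo
    rintro pdot ⟨he, ht⟩
    refine ⟨fun u v huv => ?_, fun i => ?_⟩
    · have := key_scale (p u) (p v) (pdot u) (pdot v) ‖p u‖⁻¹ ‖p v‖⁻¹
        (ht u) (ht v) (he u v huv)
      simpa using this
    · simp only [real_inner_smul_left, real_inner_smul_right]
      rw [ht i]; ring
  · -- InjOn
    intro x _ y _ hxy
    funext i
    have := congrFun hxy i
    exact smul_right_injective _ (inv_ne_zero (hnorm i)) this
  · -- SurjOn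
    rintro qdot ⟨he, ht⟩
    refine ⟨fun i => ‖p i‖ • qdot i, ⟨fun u v huv => ?_, fun i => ?_⟩, ?_⟩
    · have := key_scale (‖p u‖⁻¹ • p u) (‖p v‖⁻¹ • p v) (qdot u) (qdot v) ‖p u‖ ‖p v‖
        (ht u) (ht v) (he u v huv)
      rw [smul_smul, smul_smul, mul_inv_cancel₀ (hnorm u), mul_inv_cancel₀ (hnorm v),
        one_smul, one_smul] at this
      exact this
    · have := ht i
      simp only [real_inner_smul_left, real_inner_smul_right] at this ⊢
      rcases mul_eq_zero.mp this with h | h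
      · exact absurd h (inv_ne_zero (hnorm i))
      · rw [h]; ring
    · funext i
      simp [smul_smul, inv_mul_cancel₀ (hnorm i)]
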